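/- Let f_0,…,f_m : {-1,1}^n → ℝ and g_0,…,g_n : {-1,1}^m → ℝ satisfy the generalized polymorphism identity f_0∘(g_1,…,g_n) = g_0∘(f_1,…,f_m) on {-1,1}^{n×m}, with g_1,…,g_n, f_1,…,f_m balanced. Then for any S ⊆ [n] with S in the support of f̂_0, sets U_i ∈ supp(ĝ_i) for i ∈ S, T = ∪_{i∈S} U_i, and V_j = {i ∈ S : j ∈ U_i} for j ∈ T, the Fourier coefficients satisfy f̂_0(S)·∏_{i∈S} ĝ_i(U_i) = ĝ_0(T)·∏_{j∈T} f̂_j(V_j). -/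

import Mathlib

open Finset


noncomputable def sgn (b : Bool) : ℝ := if b then 1 else -1

lemma sgn_pm (b : Bool) : sgn b = 1 ∨ sgn b = -1 := by cases b <;> simp [sgn]


lemma sum_pi {ι κ : Type*} [Fintype ι] [DecidableEq ι] [Fintype κ] (f : ι → κ → ℝ) :
    ∑ r : ι → κ, ∏ j, f j (r j) = ∏ j, ∑ b, f j b := by
  rw [Finset.prod_univ_sum]
  simp [Fintype.piFinset_univ]

lemma orth2 {M : ℕ} (T A : Finset (Fin M)) :
    ∑ r : Fin M → Bool, (∏ j ∈ T, sgn (r j)) * ∏ j ∈ A, sgn (r j) =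
      if T = A then (2:ℝ)^M else 0 := by
  have key : ∀ r : Fin M → Bool,
      (∏ j ∈ T, sgn (r j)) * ∏ j ∈ A, sgn (r j) =
      ∏ j : Fin M,
        ((if j ∈ T then sgn (r j) else 1) * (if j ∈ A then sgn (r j) else 1)) := by
    intro r
    rw [Finset.prod_mul_distrib, Finset.prod_ite_mem, Finset.prod_ite_mem,
      Finset.univ_inter, Finset.univ_inter]
  simp_rw [key]
  rw [sum_pi (fun j b => (if j ∈ T then sgn b else 1) * (if j ∈ A then sgn b else 1))]
  have factor : ∀ j : Fin M,
      (∑ b : Bool, (if j ∈ T then sgn b else 1) * (if j ∈ A then sgn b else 1)) =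
      if ((j ∈ T) ↔ (j ∈ A)) then (2:ℝ) else 0 := by
    intro j
    by_cases hT : j ∈ T <;> by_cases hA : j ∈ A <;>
      simp [hT, hA, sgn, Fintype.sum_bool] <;> norm_num
  rw [Finset.prod_congr rfl (fun j _ => factor j)]
  by_cases h : T = A
  · subst h
    simp [Finset.prod_const, Finset.card_univ]
  · rw [if_neg h]
    obtain ⟨j, hj⟩ : ∃ j, ¬((j ∈ T) ↔ (j ∈ A)) := by
      by_contra hc
      push_neg at hc
      exact h (Finset.ext fun j => (hc j))
    exact Finset.prod_eq_zero (Finset.mem_univ j) (by rw [if_neg hj])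

lemma orth {M : ℕ} (A : Finset (Fin M)) :
    ∑ r : Fin M → Bool, ∏ j ∈ A, sgn (r j) = if A = ∅ then (2:ℝ)^M else 0 := by
  have h := orth2 (∅ : Finset (Fin M)) A
  simpa [eq_comm] using h

lemma extract {M : ℕ} (d : Finset (Fin M) → ℝ) (A : Finset (Fin M)) :
    ∑ r : Fin M → Bool,
      (∑ T : Finset (Fin M), d T * ∏ j ∈ T, sgn (r j)) * ∏ j ∈ A, sgn (r j)
      = (2:ℝ)^M * d A := by
  simp_rw [Finset.sum_mul, mul_assoc]
  rw [Finset.sum_comm]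
  simp_rw [← Finset.mul_sum, orth2]
  simp [mul_comm]

lemma key_sum {N M : ℕ} (c : Finset (Fin N) → ℝ) (d : Fin N → Finset (Fin M) → ℝ)
    (hd0 : ∀ i, d i ∅ = 0)
    (S : Finset (Fin N)) (U : Fin N → Finset (Fin M)) (hU : ∀ i ∈ S, U i ≠ ∅) :
    ∑ s : Fin N → Fin M → Bool,
      (∑ S' : Finset (Fin N), c S' *
        ∏ i ∈ S', ∑ T : Finset (Fin M), d i T * ∏ j ∈ T, sgn (s i j)) *
      ∏ i ∈ S, ∏ j ∈ U i, sgn (s i j)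
    = ((2:ℝ)^M)^N * (c S * ∏ i ∈ S, d i (U i)) := by
  set A' : Fin N → Finset (Fin M) := fun i => if i ∈ S then U i else ∅ with hA'
  have chi_eq : ∀ s : Fin N → Fin M → Bool,
      ∏ i ∈ S, ∏ j ∈ U i, sgn (s i j) = ∏ i : Fin N, ∏ j ∈ A' i, sgn (s i j) := by
    intro s
    rw [show (∏ i : Fin N, ∏ j ∈ A' i, sgn (s i j)) =
        ∏ i : Fin N, (if i ∈ S then ∏ j ∈ U i, sgn (s i j) else 1) from
      Finset.prod_congr rfl (fun i _ => by by_cases h : i ∈ S <;> simp [hA', h]),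
      Finset.prod_ite_mem, Finset.univ_inter]
  have step1 : ∀ S' : Finset (Fin N),
      ∑ s : Fin N → Fin M → Bool,
        (∏ i ∈ S', ∑ T : Finset (Fin M), d i T * ∏ j ∈ T, sgn (s i j)) *
        ∏ i ∈ S, ∏ j ∈ U i, sgn (s i j)
      = if S' = S then ((2:ℝ)^M)^N * ∏ i ∈ S, d i (U i) else 0 := by
    intro S'
    have integrand : ∀ s : Fin N → Fin M → Bool,
        (∏ i ∈ S', ∑ T : Finset (Fin M), d i T * ∏ j ∈ T, sgn (s i j)) *
        ∏ i ∈ S, ∏ j ∈ U i, sgn (s i j)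
        = ∏ i : Fin N,
            ((if i ∈ S' then ∑ T : Finset (Fin M), d i T * ∏ j ∈ T, sgn (s i j) else 1) *
             ∏ j ∈ A' i, sgn (s i j)) := by
      intro s
      rw [chi_eq, Finset.prod_mul_distrib, Finset.prod_ite_mem, Finset.univ_inter]
    simp_rw [integrand]
    rw [sum_pi (fun (i : Fin N) (r : Fin M → Bool) =>
      (if i ∈ S' then ∑ T : Finset (Fin M), d i T * ∏ j ∈ T, sgn (r j) else 1) *
      ∏ j ∈ A' i, sgn (r j))]
    have factor : ∀ i : Fin N,
        (∑ r : Fin M → Bool,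
          (if i ∈ S' then ∑ T : Finset (Fin M), d i T * ∏ j ∈ T, sgn (r j) else 1) *
          ∏ j ∈ A' i, sgn (r j))
        = if i ∈ S' then (2:ℝ)^M * d i (A' i)
          else (if A' i = ∅ then (2:ℝ)^M else 0) := by
      intro i
      by_cases h : i ∈ S'
      · simp only [h, if_true]
        exact extract (d i) (A' i)
      · simp only [h, if_false, one_mul]
        exact orth (A' i)
    rw [Finset.prod_congr rfl (fun i _ => factor i)]
    by_cases hSS : S' = S
    · subst hSS
      rw [if_pos rfl]
      have : ∀ i : Fin N,
          (if i ∈ S' then (2:ℝ)^M * d i (A' i) else (if A' i = ∅ then (2:ℝ)^M else 0))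
          = (2:ℝ)^M * (if i ∈ S' then d i (U i) else 1) := by
        intro i
        by_cases h : i ∈ S' <;> simp [hA', h]
      rw [Finset.prod_congr rfl (fun i _ => this i), Finset.prod_mul_distrib,
        Finset.prod_const, Finset.card_univ, Fintype.card_fin,
        Finset.prod_ite_mem, Finset.univ_inter]
    · rw [if_neg hSS]
      obtain ⟨i, hi⟩ : ∃ i, ¬((i ∈ S') ↔ (i ∈ S)) := by
        by_contra hc
        push_neg at hc
        exact hSS (Finset.ext fun i => (hc i))
      apply Finset.prod_eq_zero (Finset.mem_univ i)
      by_cases h : i ∈ S'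
      · have hiS : i ∉ S := by tauto
        rw [if_pos h]
        simp [hA', hiS, hd0]
      · have hiS : i ∈ S := by tauto
        rw [if_neg h, if_neg]
        simp only [hA', hiS, if_true]
        exact hU i hiS
  calc ∑ s : Fin N → Fin M → Bool,
      (∑ S' : Finset (Fin N), c S' *
        ∏ i ∈ S', ∑ T : Finset (Fin M), d i T * ∏ j ∈ T, sgn (s i j)) *
      ∏ i ∈ S, ∏ j ∈ U i, sgn (s i j)
      = ∑ S' : Finset (Fin N), c S' *
          ∑ s : Fin N → Fin M → Bool,
            (∏ i ∈ S', ∑ T : Finset (Fin M), d i T * ∏ j ∈ T, sgn (s i j)) *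
            ∏ i ∈ S, ∏ j ∈ U i, sgn (s i j) := by
        simp_rw [Finset.sum_mul, mul_assoc]
        rw [Finset.sum_comm]
        simp_rw [← Finset.mul_sum]
    _ = ((2:ℝ)^M)^N * (c S * ∏ i ∈ S, d i (U i)) := by
        simp_rw [step1]
        simp [mul_comm, mul_assoc, mul_left_comm]

/-- The basic Fourier coefficient identity for generalized
polymorphisms with balanced inner functions:
`f̂₀(S)·∏_{i∈S} ĝᵢ(Uᵢ) = ĝ₀(T)·∏_{j∈T} f̂ⱼ(Vⱼ)`
where `T = ⋃_{i∈S} Uᵢ` and `Vⱼ = {i ∈ S : j ∈ Uᵢ}`. -/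
theorem stmt_7 (n m : ℕ)
    (f : Fin (m + 1) → (Fin n → ℝ) → ℝ) (g : Fin (n + 1) → (Fin m → ℝ) → ℝ)
    (fc : Fin (m + 1) → Finset (Fin n) → ℝ) (gc : Fin (n + 1) → Finset (Fin m) → ℝ)
    (hfexp : ∀ (j : Fin (m + 1)) (x : Fin n → ℝ),
      f j x = ∑ S : Finset (Fin n), fc j S * ∏ i ∈ S, x i)
    (hgexp : ∀ (i : Fin (n + 1)) (y : Fin m → ℝ),
      g i y = ∑ T : Finset (Fin m), gc i T * ∏ j ∈ T, y j)
    (hbalf : ∀ j : Fin m, fc j.succ ∅ = 0)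
    (hbalg : ∀ i : Fin n, gc i.succ ∅ = 0)
    (hpoly : ∀ z : Fin n → Fin m → ℝ, (∀ i j, z i j = 1 ∨ z i j = -1) →
      f 0 (fun i => g i.succ (z i)) = g 0 (fun j => f j.succ (fun i => z i j)))
    (S : Finset (Fin n)) (hS : fc 0 S ≠ 0)
    (U : Fin n → Finset (Fin m)) (hU : ∀ i ∈ S, gc i.succ (U i) ≠ 0) :
    fc 0 S * ∏ i ∈ S, gc i.succ (U i) =
      gc 0 (S.biUnion U) *
        ∏ j ∈ S.biUnion U, fc j.succ (S.filter (fun i => j ∈ U i)) := by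
  classical
  set T := S.biUnion U with hT
  set V : Fin m → Finset (Fin n) := fun j => S.filter (fun i => j ∈ U i) with hV
  have hUne : ∀ i ∈ S, U i ≠ ∅ := fun i hi h => hU i hi (by rw [h]; exact hbalg i)
  have hVne : ∀ j ∈ T, V j ≠ ∅ := by
    intro j hj
    obtain ⟨i, hiS, hij⟩ := Finset.mem_biUnion.mp hj
    exact Finset.ne_empty_of_mem (Finset.mem_filter.mpr ⟨hiS, hij⟩)
  have keyF := key_sum (fc 0) (fun i => gc i.succ) hbalg S U hUne
  have keyG := key_sum (gc 0) (fun j => fc j.succ) hbalf T V hVne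
  have hswap : ∀ s : Fin n → Fin m → Bool,
      ∏ i ∈ S, ∏ j ∈ U i, sgn (s i j) = ∏ j ∈ T, ∏ i ∈ V j, sgn (s i j) := by
    intro s
    exact Finset.prod_comm' (fun i j => by
      simp only [hV, Finset.mem_filter, hT, Finset.mem_biUnion]
      constructor
      · rintro ⟨hi, hj⟩; exact ⟨⟨hi, hj⟩, ⟨i, hi, hj⟩⟩
      · rintro ⟨⟨hi, hj⟩, _⟩; exact ⟨hi, hj⟩)
  have hEq : ∑ s : Fin n → Fin m → Bool,
      (∑ S' : Finset (Fin n), fc 0 S' *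
        ∏ i ∈ S', ∑ T' : Finset (Fin m), gc i.succ T' * ∏ j ∈ T', sgn (s i j)) *
      ∏ i ∈ S, ∏ j ∈ U i, sgn (s i j)
      = ∑ s : Fin m → Fin n → Bool,
      (∑ T' : Finset (Fin m), gc 0 T' *
        ∏ j ∈ T', ∑ S' : Finset (Fin n), fc j.succ S' * ∏ i ∈ S', sgn (s j i)) *
      ∏ j ∈ T, ∏ i ∈ V j, sgn (s j i) := by
    apply Fintype.sum_equiv
      (⟨Function.swap, Function.swap, fun _ => rfl, fun _ => rfl⟩ :
        (Fin n → Fin m → Bool) ≃ (Fin m → Fin n → Bool))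
    intro s
    have h1 : (∑ S' : Finset (Fin n), fc 0 S' *
        ∏ i ∈ S', ∑ T' : Finset (Fin m), gc i.succ T' * ∏ j ∈ T', sgn (s i j))
        = f 0 (fun i => g i.succ (fun j => sgn (s i j))) := by
      simp only [hfexp, hgexp]
    have h2 : (∑ T' : Finset (Fin m), gc 0 T' *
        ∏ j ∈ T', ∑ S' : Finset (Fin n), fc j.succ S' * ∏ i ∈ S', sgn (s i j))
        = g 0 (fun j => f j.succ (fun i => sgn (s i j))) := by
      simp only [hfexp, hgexp]
    have h3 := hpoly (fun i j => sgn (s i j)) (fun i j => sgn_pm _)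
    show _ = _
    rw [h1, h3, hswap s]
    congr 1
    exact h2.symm
  rw [keyF, keyG] at hEq
  have hpow : ((2:ℝ)^m)^n = ((2:ℝ)^n)^m := by
    rw [← pow_mul, ← pow_mul, Nat.mul_comm]
  rw [hpow] at hEq
  exact mul_left_cancel₀ (pow_ne_zero _ (pow_ne_zero _ two_ne_zero)) hEq
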